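/- Let h_m: Q → [0,∞) be measurable functions on a set Q of finite measure with h_m → 0 a.e. in Q, where h_m = (S(A_m) − S(A)) : (A_m − A) with S(D) = |D|^{q-2}D strictly monotone (q > 1), and A_m, A measurable matrix fields. Then A_m → A a.e. in Q, and by continuity of S, S(A_m) → S(A) a.e. in Q. -/

import Mathlib

open MeasureTheory

/-- Frobenius inner product on 3×3 real matrices. -/
noncomputable def fdot (A B : Matrix (Fin 3) (Fin 3) ℝ) : ℝ := ∑ i, ∑ j, A i j * B i j

/-- Frobenius norm of a 3×3 real matrix. -/
noncomputable def fnorm (A : Matrix (Fin 3) (Fin 3) ℝ) : ℝ := Real.sqrt (∑ i, ∑ j, (A i j) ^ 2)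

/-- The power-law stress `S(D) = |D|^{q-2} D`, equal to `0` when `D = 0`. -/
noncomputable def stress (q : ℝ) (D : Matrix (Fin 3) (Fin 3) ℝ) : Matrix (Fin 3) (Fin 3) ℝ :=
  if D = 0 then 0 else (fnorm D) ^ (q - 2) • D

namespace Stmt15Aux

open Filter Real

abbrev E := Matrix (Fin 3) (Fin 3) ℝ

instance : FirstCountableTopology E :=
  inferInstanceAs (FirstCountableTopology (Fin 3 → Fin 3 → ℝ))

lemma fnorm_nonneg (A : E) : 0 ≤ fnorm A := Real.sqrt_nonneg _

lemma fnorm_sq (A : E) : fnorm A ^ 2 = ∑ i, ∑ j, (A i j) ^ 2 :=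
  Real.sq_sqrt (by positivity)

lemma fdot_self (A : E) : fdot A A = fnorm A ^ 2 := by
  rw [fnorm_sq]; simp [fdot, sq]

lemma fnorm_eq_zero {A : E} (h : fnorm A = 0) : A = 0 := by
  have h2 : ∑ i, ∑ j, (A i j) ^ 2 = 0 := by
    have := fnorm_sq A; rw [h] at this; linarith [this]
  have : ∀ i ∈ Finset.univ, ∀ j ∈ Finset.univ, (A i j) ^ 2 = 0 := by
    intro i _
    have hi := (Finset.sum_eq_zero_iff_of_nonneg
      (fun i _ => Finset.sum_nonneg fun j _ => sq_nonneg _)).1 h2 i (Finset.mem_univ i)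
    exact (Finset.sum_eq_zero_iff_of_nonneg (fun j _ => sq_nonneg _)).1 hi
  ext i j
  simpa using pow_eq_zero_iff (n := 2) (by norm_num) |>.1
    (this i (Finset.mem_univ i) j (Finset.mem_univ j))

lemma fnorm_pos {A : E} (h : A ≠ 0) : 0 < fnorm A :=
  lt_of_le_of_ne (fnorm_nonneg A) fun he => h (fnorm_eq_zero he.symm)

lemma fnorm_zero : fnorm (0 : E) = 0 := by simp [fnorm]

lemma fdot_le (A B : E) : fdot A B ≤ fnorm A * fnorm B := by
  have := Real.sum_mul_le_sqrt_mul_sqrt (Finset.univ : Finset (Fin 3 × Fin 3))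
    (fun p => A p.1 p.2) (fun p => B p.1 p.2)
  simpa [fdot, fnorm, Fintype.sum_prod_type] using this

lemma fnorm_sub_sq (A B : E) :
    fnorm (A - B) ^ 2 = fnorm A ^ 2 - 2 * fdot A B + fnorm B ^ 2 := by
  rw [fnorm_sq, fnorm_sq, fnorm_sq]
  simp [fdot, Fin.sum_univ_succ, Matrix.sub_apply]
  ring

lemma fdot_expand (P Q D A0 : E) :
    fdot (P - Q) (D - A0) = fdot P D - fdot P A0 - fdot Q D + fdot Q A0 := by
  simp [fdot, Fin.sum_univ_succ, Matrix.sub_apply]; ring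

lemma fdot_smul (x : ℝ) (P Q : E) : fdot (x • P) Q = x * fdot P Q := by
  simp [fdot, Fin.sum_univ_succ, Matrix.smul_apply, smul_eq_mul]; ring

lemma fdot_comm (P Q : E) : fdot P Q = fdot Q P := by
  simp [fdot, mul_comm]

lemma fdot_zero_left (Q : E) : fdot 0 Q = 0 := by simp [fdot]

lemma fdot_zero_right (P : E) : fdot P 0 = 0 := by simp [fdot]

section
variable {q : ℝ} (hq : 1 < q) (A0 D : E)

lemma phi_expand (hD : D ≠ 0) (hA : A0 ≠ 0) :
    fdot (stress q D - stress q A0) (D - A0)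
      = fnorm D ^ (q - 2) * fnorm D ^ 2
        - (fnorm D ^ (q - 2) + fnorm A0 ^ (q - 2)) * fdot D A0
        + fnorm A0 ^ (q - 2) * fnorm A0 ^ 2 := by
  rw [stress, stress, if_neg hD, if_neg hA, fdot_expand, fdot_smul, fdot_smul,
    fdot_smul, fdot_smul, fdot_self, fdot_self, fdot_comm A0 D]
  ring

omit hq in
lemma rpow_split {b : ℝ} (hb : 0 < b) :
    b ^ (q - 1) = b ^ (q - 2) * b ∧ b ^ (q - 2) * b ^ 2 = b ^ (q - 1) * b := by
  have h1 : b ^ (q - 1) = b ^ (q - 2) * b := by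
    rw [← Real.rpow_add_one hb.ne' (q - 2)]; congr 1; ring
  exact ⟨h1, by rw [h1]; ring⟩

include hq

lemma phi_lower :
    (fnorm D ^ (q - 1) - fnorm A0 ^ (q - 1)) * (fnorm D - fnorm A0)
      ≤ fdot (stress q D - stress q A0) (D - A0) := by
  by_cases hD : D = 0
  · subst hD
    by_cases hA : A0 = 0
    · simp [hA, stress, fdot]
    · have hA' := fnorm_pos hA
      obtain ⟨ha1, ha2⟩ := rpow_split (q := q) hA'
      rw [stress, stress, if_pos rfl, if_neg hA, fdot_expand, fdot_zero_left, fdot_zero_left,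
        fdot_smul, fdot_smul, fdot_self, fdot_comm A0 0, fdot_zero_left,
        fnorm_zero, Real.zero_rpow (by linarith : q - 1 ≠ 0)]
      nlinarith
  · by_cases hA : A0 = 0
    · have hD' := fnorm_pos hD
      obtain ⟨hb1, hb2⟩ := rpow_split (q := q) hD'
      rw [hA, stress, stress, if_pos rfl, if_neg hD, fdot_expand, fdot_zero_left, fdot_zero_left,
        fdot_smul, fdot_smul, fdot_self, fdot_zero_right,
        fnorm_zero, Real.zero_rpow (by linarith : q - 1 ≠ 0)]
      nlinarith
    · have hD' := fnorm_pos hD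
      have hA' := fnorm_pos hA
      rw [phi_expand A0 D hD hA]
      have hcs := fdot_le D A0
      obtain ⟨hb1, hb2⟩ := rpow_split (q := q) hD'
      obtain ⟨ha1, ha2⟩ := rpow_split (q := q) hA'
      have hbp : (0:ℝ) < fnorm D ^ (q - 2) := Real.rpow_pos_of_pos hD' _
      have hap : (0:ℝ) < fnorm A0 ^ (q - 2) := Real.rpow_pos_of_pos hA' _
      nlinarith

lemma phi_zero (h : fdot (stress q D - stress q A0) (D - A0) = 0) : D = A0 := by
  by_cases hD : D = 0
  · subst hD
    by_contra hne
    have hA : A0 ≠ 0 := fun h0 => hne h0.symm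
    have hlow := phi_lower hq A0 0
    rw [h, fnorm_zero, Real.zero_rpow (by linarith : q - 1 ≠ 0)] at hlow
    have hA' := fnorm_pos hA
    have hap : (0:ℝ) < fnorm A0 ^ (q - 1) := Real.rpow_pos_of_pos hA' _
    nlinarith
  · by_cases hA : A0 = 0
    · exfalso
      have hlow := phi_lower hq A0 D
      rw [h, hA, fnorm_zero, Real.zero_rpow (by linarith : q - 1 ≠ 0)] at hlow
      have hD' := fnorm_pos hD
      have hdp : (0:ℝ) < fnorm D ^ (q - 1) := Real.rpow_pos_of_pos hD' _
      nlinarith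
    · have hD' := fnorm_pos hD
      have hA' := fnorm_pos hA
      have hexp := phi_expand (q := q) A0 D hD hA
      rw [h] at hexp
      have hcs := fdot_le D A0
      have hbp : (0:ℝ) < fnorm D ^ (q - 2) := Real.rpow_pos_of_pos hD' _
      have hap : (0:ℝ) < fnorm A0 ^ (q - 2) := Real.rpow_pos_of_pos hA' _
      have hmono : (fnorm D ^ (q - 1) - fnorm A0 ^ (q - 1)) * (fnorm D - fnorm A0) ≥ 0 := by
        rcases le_total (fnorm D) (fnorm A0) with hle | hle
        · have : fnorm D ^ (q - 1) ≤ fnorm A0 ^ (q - 1) :=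
            Real.rpow_le_rpow hD'.le hle (by linarith)
          nlinarith
        · have : fnorm A0 ^ (q - 1) ≤ fnorm D ^ (q - 1) :=
            Real.rpow_le_rpow hA'.le hle (by linarith)
          nlinarith
      obtain ⟨hb1, hb2⟩ := rpow_split (q := q) hD'
      obtain ⟨ha1, ha2⟩ := rpow_split (q := q) hA'
      have hsplit : (fnorm D ^ (q - 1) - fnorm A0 ^ (q - 1)) * (fnorm D - fnorm A0)
          + (fnorm D ^ (q - 2) + fnorm A0 ^ (q - 2)) * (fnorm D * fnorm A0 - fdot D A0) = 0 := by
        nlinarith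
      have hterm2 : (fnorm D ^ (q - 2) + fnorm A0 ^ (q - 2))
          * (fnorm D * fnorm A0 - fdot D A0) ≥ 0 := by nlinarith
      have h1 : (fnorm D ^ (q - 1) - fnorm A0 ^ (q - 1)) * (fnorm D - fnorm A0) = 0 := by linarith
      have h2 : fnorm D * fnorm A0 - fdot D A0 = 0 := by
        have hz : (fnorm D ^ (q - 2) + fnorm A0 ^ (q - 2))
            * (fnorm D * fnorm A0 - fdot D A0) = 0 := by linarith
        rcases mul_eq_zero.1 hz with h' | h'
        · exact absurd h' (by positivity)
        · exact h'
      have heq : fnorm D = fnorm A0 := by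
        by_contra hne
        rcases lt_or_gt_of_ne hne with hlt | hlt
        · have : fnorm D ^ (q - 1) < fnorm A0 ^ (q - 1) :=
            Real.rpow_lt_rpow hD'.le hlt (by linarith)
          nlinarith
        · have : fnorm A0 ^ (q - 1) < fnorm D ^ (q - 1) :=
            Real.rpow_lt_rpow hA'.le hlt (by linarith)
          nlinarith
      have hsq : fnorm (D - A0) ^ 2 = 0 := by
        rw [fnorm_sub_sq]; nlinarith
      have h0 : fnorm (D - A0) = 0 := by nlinarith [fnorm_nonneg (D - A0)]
      exact sub_eq_zero.1 (fnorm_eq_zero h0)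

end

lemma continuous_fnorm : Continuous fnorm := by
  unfold fnorm
  apply Real.continuous_sqrt.comp
  apply continuous_finset_sum
  intro i _
  apply continuous_finset_sum
  intro j _
  exact ((continuous_apply j).comp (continuous_apply i)).pow 2

lemma entry_le_fnorm (A : E) (i j : Fin 3) : |A i j| ≤ fnorm A := by
  rw [← Real.sqrt_sq_eq_abs]
  apply Real.sqrt_le_sqrt
  calc A i j ^ 2 ≤ ∑ j', (A i j') ^ 2 :=
        Finset.single_le_sum (f := fun j' => A i j' ^ 2)
          (fun j' _ => sq_nonneg _) (Finset.mem_univ j)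
    _ ≤ ∑ i', ∑ j', (A i' j') ^ 2 :=
        Finset.single_le_sum (f := fun i' => ∑ j', (A i' j') ^ 2)
          (fun i' _ => Finset.sum_nonneg fun j' _ => sq_nonneg _) (Finset.mem_univ i)

variable {q : ℝ}

lemma abs_stress_entry_le (hq : 1 < q) (D : E) (i j : Fin 3) :
    |stress q D i j| ≤ fnorm D ^ (q - 1) := by
  by_cases hD : D = 0
  · simp [stress, hD, fnorm_zero, Real.zero_rpow (by linarith : q - 1 ≠ 0)]
  · have hD' := fnorm_pos hD
    have hpw : (0:ℝ) < fnorm D ^ (q - 2) := Real.rpow_pos_of_pos hD' _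
    rw [stress, if_neg hD]
    simp only [Matrix.smul_apply, smul_eq_mul, abs_mul, abs_of_pos hpw]
    calc fnorm D ^ (q - 2) * |D i j| ≤ fnorm D ^ (q - 2) * fnorm D :=
          mul_le_mul_of_nonneg_left (entry_le_fnorm D i j) hpw.le
      _ = fnorm D ^ (q - 1) := by
          rw [← Real.rpow_add_one hD'.ne' (q - 2)]; congr 1; ring

lemma continuous_stress (hq : 1 < q) : Continuous (stress q) := by
  rw [continuous_iff_continuousAt]
  intro D
  by_cases hD : D = 0
  · subst hD
    have h0 : stress q 0 = (0 : E) := by simp [stress]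
    rw [ContinuousAt, h0]
    refine tendsto_pi_nhds.2 ?_
    intro i
    refine tendsto_pi_nhds.2 ?_
    intro j
    have hg : Filter.Tendsto (fun B : E => fnorm B ^ (q - 1)) (nhds 0) (nhds 0) := by
      have hc : ContinuousAt (fun t : ℝ => t ^ (q - 1)) (fnorm 0) := by
        rw [fnorm_zero]
        exact Real.continuousAt_rpow_const 0 (q - 1) (Or.inr (by linarith))
      have hcomp : ContinuousAt (fun B : E => fnorm B ^ (q - 1)) 0 :=
        ContinuousAt.comp hc (continuous_fnorm.continuousAt (x := (0 : E)))
      have := hcomp.tendsto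
      rwa [fnorm_zero, Real.zero_rpow (by linarith : q - 1 ≠ 0)] at this
    have : Filter.Tendsto (fun B : E => stress q B i j) (nhds 0) (nhds 0) :=
      squeeze_zero_norm (fun B => abs_stress_entry_le hq B i j) hg
    simpa using this
  · have hD' := fnorm_pos hD
    have hopen : ∀ᶠ B in nhds D, B ≠ 0 :=
      (isOpen_compl_singleton (x := (0 : E))).eventually_mem (by simpa using hD)
    have heq : (fun B : E => fnorm B ^ (q - 2) • B) =ᶠ[nhds D] stress q :=
      hopen.mono fun B hB => by simp [stress, hB]
    apply ContinuousAt.congr _ heq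
    exact ((Real.continuousAt_rpow_const _ _ (Or.inl hD'.ne')).comp
      continuous_fnorm.continuousAt).smul continuousAt_id

lemma continuous_phi (hq : 1 < q) (A0 : E) :
    Continuous (fun D : E => fdot (stress q D - stress q A0) (D - A0)) := by
  have h1 : Continuous (fun D : E => stress q D - stress q A0) :=
    (continuous_stress hq).sub continuous_const
  have h2 : Continuous (fun D : E => D - A0) := continuous_id.sub continuous_const
  unfold fdot
  apply continuous_finset_sum
  intro i _
  apply continuous_finset_sum
  intro j _
  exact (((continuous_apply j).comp ((continuous_apply i).comp h1)).mul
    ((continuous_apply j).comp ((continuous_apply i).comp h2)))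

/-- The key pointwise Dal Maso–Murat convergence lemma. -/
lemma key (hq : 1 < q) (A0 : E) (B : ℕ → E)
    (h : Filter.Tendsto (fun m => fdot (stress q (B m) - stress q A0) (B m - A0))
      Filter.atTop (nhds 0)) :
    Filter.Tendsto B Filter.atTop (nhds A0) := by
  apply Filter.tendsto_of_subseq_tendsto
  intro ns hns
  set a := fnorm A0 with ha_def
  -- coercivity funnel
  have hcoer : Tendsto (fun b : ℝ => (b ^ (q - 1) - a ^ (q - 1)) * (b - a)) atTop atTop := by
    have h1 : Tendsto (fun b : ℝ => b ^ (q - 1) - a ^ (q - 1)) atTop atTop := by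
      simpa [sub_eq_add_neg] using
        tendsto_atTop_add_const_right atTop (-(a ^ (q - 1)))
          (tendsto_rpow_atTop (by linarith : 0 < q - 1))
    have h2 : Tendsto (fun b : ℝ => b - a) atTop atTop := by
      simpa [sub_eq_add_neg] using tendsto_atTop_add_const_right atTop (-a) tendsto_id
    exact h1.atTop_mul_atTop₀ h2
  obtain ⟨M, hM⟩ := (hcoer.eventually_ge_atTop 1).exists_forall_of_atTop
  have h' : Tendsto (fun n => fdot (stress q (B (ns n)) - stress q A0) (B (ns n) - A0))
      atTop (nhds 0) := h.comp hns
  have hlt : ∀ᶠ n in atTop,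
      fdot (stress q (B (ns n)) - stress q A0) (B (ns n) - A0) < 1 :=
    h'.eventually (gt_mem_nhds one_pos)
  have hbound : ∀ᶠ n in atTop, fnorm (B (ns n)) < M := by
    refine hlt.mono fun n hn => ?_
    by_contra hge
    push_neg at hge
    have h1 := hM _ hge
    have hlow := phi_lower hq A0 (B (ns n))
    linarith
  -- compactness
  set s : Set E := {A : E | ∀ i j, A i j ∈ Set.Icc (-M) M} with hs_def
  have hscompact : IsCompact s := by
    have : s = Set.univ.pi (fun _ : Fin 3 => Set.univ.pi fun _ : Fin 3 => Set.Icc (-M) M) := by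
      ext A
      constructor
      · intro h
        exact Set.mem_univ_pi.2 fun i => Set.mem_univ_pi.2 fun j => h i j
      · intro h i j
        exact Set.mem_univ_pi.1 (Set.mem_univ_pi.1 h i) j
    rw [this]
    exact isCompact_univ_pi fun i => isCompact_univ_pi fun j => isCompact_Icc
  have hfreq : ∃ᶠ n in atTop, B (ns n) ∈ s := by
    refine (hbound.mono fun n hn => ?_).frequently
    intro i j
    have := entry_le_fnorm (B (ns n)) i j
    rw [Set.mem_Icc]
    constructor <;> [linarith [abs_le.1 (le_of_lt (lt_of_le_of_lt this hn))|>.1];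
      linarith [abs_le.1 (le_of_lt (lt_of_le_of_lt this hn))|>.2]]
  obtain ⟨c, _, φ, hφ, htend⟩ := hscompact.isSeqCompact.subseq_of_frequently_in hfreq
  -- identify the limit
  have hΦtend : Tendsto (fun n => fdot (stress q (B (ns (φ n))) - stress q A0) (B (ns (φ n)) - A0))
      atTop (nhds (fdot (stress q c - stress q A0) (c - A0))) :=
    ((continuous_phi hq A0).continuousAt.tendsto).comp htend
  have hΦzero : Tendsto (fun n => fdot (stress q (B (ns (φ n))) - stress q A0) (B (ns (φ n)) - A0))
      atTop (nhds 0) := h'.comp hφ.tendsto_atTop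
  have hc0 : fdot (stress q c - stress q A0) (c - A0) = 0 :=
    tendsto_nhds_unique hΦtend hΦzero
  have hc : c = A0 := phi_zero hq A0 c hc0
  exact ⟨φ, by simpa [Function.comp_def, hc] using htend⟩

end Stmt15Aux

/-- Dal Maso–Murat: if the monotonicity products tend to `0` a.e., then `A_m → A` a.e.
and `S(A_m) → S(A)` a.e. -/
theorem stmt15 {X : Type*} [MeasurableSpace X] (μ : Measure X) [IsFiniteMeasure μ]
    (q : ℝ) (hq : 1 < q)
    (A : ℕ → X → Matrix (Fin 3) (Fin 3) ℝ) (A0 : X → Matrix (Fin 3) (Fin 3) ℝ)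
    (hae : ∀ᵐ x ∂μ, Filter.Tendsto
      (fun m => fdot (stress q (A m x) - stress q (A0 x)) (A m x - A0 x))
      Filter.atTop (nhds 0)) :
    (∀ᵐ x ∂μ, Filter.Tendsto (fun m => A m x) Filter.atTop (nhds (A0 x))) ∧
    (∀ᵐ x ∂μ, Filter.Tendsto (fun m => stress q (A m x)) Filter.atTop
      (nhds (stress q (A0 x)))) := by
  have h1 : ∀ᵐ x ∂μ, Filter.Tendsto (fun m => A m x) Filter.atTop (nhds (A0 x)) :=
    hae.mono fun x hx => Stmt15Aux.key hq (A0 x) (fun m => A m x) hx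
  refine ⟨h1, h1.mono fun x hx => ?_⟩
  exact ((Stmt15Aux.continuous_stress hq).tendsto (A0 x)).comp hx
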